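/- Let F ∈ ℂ[x₀,…,xₙ] be a nonzero homogeneous cubic polynomial whose singular locus in ℙⁿ has codimension 1. Then F = L²·M for some linear forms L, M ∈ ℂ[x₀,…,xₙ]. Conversely, any F = L²M with L, M linearly independent linear forms has singular locus of codimension exactly 1. Hence the cubics of symmetric geometric rank 1 are exactly the points of the tangential variety of the third Veronese variety. -/

import Mathlib

open MvPolynomial

/-- The height (codimension) of an ideal: the infimum of the heights of the primes
containing it.  For an ideal `I` of a polynomial ring this is the codimension of the
affine zero locus `V(I)`. -/
noncomputable def idealHeight {R : Type*} [CommRing R] (I : Ideal R) : ℕ∞ :=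
  ⨅ p : {p : PrimeSpectrum R // I ≤ p.asIdeal}, Order.height p.1

/-- The Jacobian ideal of a polynomial: the ideal generated by all its first partial
derivatives.  Its zero locus is the (affine cone over the) singular locus. -/
noncomputable def jacobianIdeal {σ : Type*} (F : MvPolynomial σ ℂ) :
    Ideal (MvPolynomial σ ℂ) :=
  Ideal.span (Set.range fun i => pderiv i F)

/-- The symmetric geometric rank of (the symmetric tensor corresponding to) a
homogeneous polynomial: the codimension of its singular locus. -/
noncomputable def SGR {σ : Type*} (F : MvPolynomial σ ℂ) : ℕ∞ :=
  idealHeight (jacobianIdeal F)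


lemma euler_mono {σ : Type*} [Fintype σ] (s : σ →₀ ℕ) (a : ℂ) :
    ∑ i : σ, X i * pderiv i (monomial s a) = (s.degree) • (monomial s a : MvPolynomial σ ℂ) := by
  classical
  have key : ∀ i : σ, X i * pderiv i (monomial s a)
      = monomial s (a * (s i : ℂ)) := by
    intro i
    rw [pderiv_monomial, X, monomial_mul, one_mul]
    rcases Nat.eq_zero_or_pos (s i) with h | h
    · simp [h]
    · have hs : (s - Finsupp.single i 1) + Finsupp.single i 1 = s :=
        tsub_add_cancel_of_le (Finsupp.single_le_iff.mpr h)
      rw [add_comm, hs]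
  rw [Finset.sum_congr rfl (fun i _ => key i), ← map_sum, ← Finset.mul_sum]
  have : ∑ i : σ, (s i : ℂ) = (s.degree : ℂ) := by
    rw [Finsupp.degree_apply]
    push_cast
    exact (Finset.sum_subset (Finset.subset_univ _) (by intro x _ hx; simpa using hx)).symm
  rw [this, smul_monomial]
  congr 1
  rw [mul_comm]
  simp [nsmul_eq_mul]

lemma euler {σ : Type*} [Fintype σ] {d : ℕ} {φ : MvPolynomial σ ℂ}
    (hφ : φ.IsHomogeneous d) : ∑ i : σ, X i * pderiv i φ = d • φ := by
  classical
  conv_lhs => rw [← φ.support_sum_monomial_coeff]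
  conv_rhs => rw [← φ.support_sum_monomial_coeff]
  rw [Finset.smul_sum]
  have : ∀ i : σ, pderiv i (∑ v ∈ φ.support, monomial v (coeff v φ))
      = ∑ v ∈ φ.support, pderiv i (monomial v (coeff v φ)) := fun i => map_sum _ _ _
  simp_rw [this, Finset.mul_sum]
  rw [Finset.sum_comm]
  refine Finset.sum_congr rfl fun v hv => ?_
  rw [euler_mono]
  congr 1
  have : Finsupp.degree v = d := by
    have := hφ (mem_support_iff.mp hv)
    rw [Finsupp.degree_eq_weight_one]
    exact this
  rw [this]

variable {σ : Type*} {R : Type*}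

lemma hc_ne_zero_le {R : Type*} [CommSemiring R] {a : MvPolynomial σ R} {i : ℕ}
    (h : homogeneousComponent i a ≠ 0) :
    ∃ d ∈ a.support, Finsupp.degree d = i := by
  obtain ⟨d, hd⟩ := exists_coeff_ne_zero h
  rw [coeff_homogeneousComponent] at hd
  by_cases hdeg : Finsupp.degree d = i
  · exact ⟨d, mem_support_iff.mpr (by simpa [hdeg] using hd), hdeg⟩
  · simp [hdeg] at hd

/-- convolution formula in a special case -/
lemma hc_mul_single [CommSemiring R] (a b : MvPolynomial σ R) (i₀ j₀ : ℕ)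
    (H : ∀ i j, homogeneousComponent i a ≠ 0 → homogeneousComponent j b ≠ 0 →
      i + j = i₀ + j₀ → i = i₀ ∧ j = j₀) :
    homogeneousComponent (i₀ + j₀) (a * b)
      = homogeneousComponent i₀ a * homogeneousComponent j₀ b := by
  classical
  conv_lhs => rw [← a.sum_homogeneousComponent, ← b.sum_homogeneousComponent]
  rw [Finset.sum_mul_sum, map_sum]
  simp_rw [map_sum]
  have step : ∀ i ∈ Finset.range (a.totalDegree + 1),
      (∑ j ∈ Finset.range (b.totalDegree + 1),
        homogeneousComponent (i₀ + j₀) (homogeneousComponent i a * homogeneousComponent j b))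
      = if i = i₀ then homogeneousComponent i₀ a * homogeneousComponent j₀ b else 0 := by
    intro i _
    have term : ∀ j, homogeneousComponent (i₀ + j₀) (homogeneousComponent i a * homogeneousComponent j b)
        = if i = i₀ ∧ j = j₀ then homogeneousComponent i₀ a * homogeneousComponent j₀ b else 0 := by
      intro j
      have hmem : homogeneousComponent i a * homogeneousComponent j b
          ∈ homogeneousSubmodule σ R (i + j) :=
        (homogeneousComponent_isHomogeneous i a).mul (homogeneousComponent_isHomogeneous j b)
      rw [homogeneousComponent_of_mem hmem]
      by_cases hia : homogeneousComponent i a = 0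
      · simp only [hia, zero_mul, ite_self]
        by_cases h : i = i₀ ∧ j = j₀
        · rw [if_pos h, ← h.1, hia, zero_mul]
        · rw [if_neg h]
      by_cases hjb : homogeneousComponent j b = 0
      · simp only [hjb, mul_zero, ite_self]
        by_cases h : i = i₀ ∧ j = j₀
        · rw [if_pos h, ← h.2, hjb, mul_zero]
        · rw [if_neg h]
      by_cases hsum : i + j = i₀ + j₀
      · have := H i j hia hjb (by omega)
        rw [if_pos (by omega), if_pos this, this.1, this.2]
      · rw [if_neg (by omega), if_neg (by rintro ⟨rfl, rfl⟩; omega)]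
    rw [Finset.sum_congr rfl fun j _ => term j]
    by_cases hi : i = i₀
    · subst hi
      rw [if_pos rfl]
      by_cases hjb : homogeneousComponent j₀ b = 0
      · simp [hjb]
      · have hj₀mem : j₀ ∈ Finset.range (b.totalDegree + 1) := by
          refine Finset.mem_range.mpr ?_
          by_contra h
          exact hjb (homogeneousComponent_eq_zero _ b (by omega))
        rw [Finset.sum_eq_single j₀ (fun j _ hj => by simp [hj]) (fun h => absurd hj₀mem h)]
        simp
    · rw [if_neg hi]
      apply Finset.sum_eq_zero
      intro j _
      rw [if_neg (by tauto)]
  rw [Finset.sum_congr rfl step]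
  by_cases hia : homogeneousComponent i₀ a = 0
  · simp [hia]
  · have hi₀mem : i₀ ∈ Finset.range (a.totalDegree + 1) := by
      refine Finset.mem_range.mpr ?_
      by_contra h
      exact hia (homogeneousComponent_eq_zero _ a (by omega))
    rw [Finset.sum_eq_single i₀ (fun i _ hi => by simp [hi]) (fun h => absurd hi₀mem h)]
    simp

lemma homog_factor [CommRing R] [IsDomain R] {F a b : MvPolynomial σ R} {d : ℕ}
    (hF : F.IsHomogeneous d) (h0 : F ≠ 0) (hab : F = a * b) :
    ∃ i j : ℕ, i + j = d ∧ a.IsHomogeneous i ∧ b.IsHomogeneous j := by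
  classical
  have ha : a ≠ 0 := fun h => h0 (by simp [hab, h])
  have hb : b ≠ 0 := fun h => h0 (by simp [hab, h])
  have hsa : a.support.Nonempty := Finset.nonempty_iff_ne_empty.mpr
    (fun h => ha (support_eq_empty.mp h))
  have hsb : b.support.Nonempty := Finset.nonempty_iff_ne_empty.mpr
    (fun h => hb (support_eq_empty.mp h))
  set ta := a.support.sup' hsa Finsupp.degree with hta
  set ba := a.support.inf' hsa Finsupp.degree with hba
  set tb := b.support.sup' hsb Finsupp.degree with htb
  set bb := b.support.inf' hsb Finsupp.degree with hbb
  -- nonvanishing of extreme components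
  have key : ∀ (p : MvPolynomial σ R) (hs : p.support.Nonempty) (k : ℕ),
      (∃ m ∈ p.support, Finsupp.degree m = k) → homogeneousComponent k p ≠ 0 := by
    intro p hs k ⟨m, hm, hmk⟩ hzero
    have : coeff m (homogeneousComponent k p) = coeff m p := by
      rw [coeff_homogeneousComponent, if_pos hmk]
    rw [hzero, coeff_zero] at this
    exact (mem_support_iff.mp hm) this.symm
  have hcta : homogeneousComponent ta a ≠ 0 := by
    obtain ⟨m, hm, hmeq⟩ := Finset.exists_mem_eq_sup' hsa Finsupp.degree
    exact key a hsa ta ⟨m, hm, hmeq.symm⟩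
  have hcba : homogeneousComponent ba a ≠ 0 := by
    obtain ⟨m, hm, hmeq⟩ := Finset.exists_mem_eq_inf' hsa Finsupp.degree
    exact key a hsa ba ⟨m, hm, hmeq.symm⟩
  have hctb : homogeneousComponent tb b ≠ 0 := by
    obtain ⟨m, hm, hmeq⟩ := Finset.exists_mem_eq_sup' hsb Finsupp.degree
    exact key b hsb tb ⟨m, hm, hmeq.symm⟩
  have hcbb : homogeneousComponent bb b ≠ 0 := by
    obtain ⟨m, hm, hmeq⟩ := Finset.exists_mem_eq_inf' hsb Finsupp.degree
    exact key b hsb bb ⟨m, hm, hmeq.symm⟩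
  -- bounds
  have bnda : ∀ i : ℕ, homogeneousComponent i a ≠ 0 → ba ≤ i ∧ i ≤ ta := by
    intro i hi
    obtain ⟨m, hm, hmk⟩ := hc_ne_zero_le hi
    exact ⟨hmk ▸ Finset.inf'_le _ hm, hmk ▸ Finset.le_sup' _ hm⟩
  have bndb : ∀ j : ℕ, homogeneousComponent j b ≠ 0 → bb ≤ j ∧ j ≤ tb := by
    intro j hj
    obtain ⟨m, hm, hmk⟩ := hc_ne_zero_le hj
    exact ⟨hmk ▸ Finset.inf'_le _ hm, hmk ▸ Finset.le_sup' _ hm⟩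
  -- components of F are concentrated in degree d
  have hFk : ∀ k : ℕ, homogeneousComponent k F ≠ 0 → k = d := by
    intro k hk
    by_contra hne
    rw [homogeneousComponent_of_mem ((mem_homogeneousSubmodule _ _).mpr hF), if_neg hne] at hk
    exact hk rfl
  have top : ta + tb = d := by
    apply hFk
    rw [hab, hc_mul_single a b ta tb
      (fun i j hi hj hij => ⟨by have := (bnda i hi).2; have := (bndb j hj).2; omega,
        by have := (bnda i hi).2; have := (bndb j hj).2; omega⟩)]
    exact mul_ne_zero hcta hctb
  have bot : ba + bb = d := by
    apply hFk
    rw [hab, hc_mul_single a b ba bb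
      (fun i j hi hj hij => ⟨by have := (bnda i hi).1; have := (bndb j hj).1; omega,
        by have := (bnda i hi).1; have := (bndb j hj).1; omega⟩)]
    exact mul_ne_zero hcba hcbb
  obtain ⟨m, hm⟩ := hsa
  have hle_a : ba ≤ ta := le_trans (Finset.inf'_le _ hm) (Finset.le_sup' _ hm)
  obtain ⟨m2, hm2⟩ := hsb
  have hle_b : bb ≤ tb := le_trans (Finset.inf'_le _ hm2) (Finset.le_sup' _ hm2)
  have hba_eq : ba = ta ∧ bb = tb := by omega
  refine ⟨ta, tb, top, ?_, ?_⟩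
  · intro m' hm'
    have hmem : m' ∈ a.support := mem_support_iff.mpr hm'
    have h1 : Finsupp.degree m' ≤ ta := Finset.le_sup' _ hmem
    have h2 : ba ≤ Finsupp.degree m' := Finset.inf'_le _ hmem
    have : Finsupp.degree m' = ta := by omega
    rw [Finsupp.degree_eq_weight_one] at this
    exact this
  · intro m' hm'
    have hmem : m' ∈ b.support := mem_support_iff.mpr hm'
    have h1 : Finsupp.degree m' ≤ tb := Finset.le_sup' _ hmem
    have h2 : bb ≤ Finsupp.degree m' := Finset.inf'_le _ hmem
    have : Finsupp.degree m' = tb := by omega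
    rw [Finsupp.degree_eq_weight_one] at this
    exact this

lemma homog0_eq_C [CommSemiring R] {φ : MvPolynomial σ R} (h : φ.IsHomogeneous 0) :
    φ = C (coeff 0 φ) := by
  classical
  ext m
  by_cases hm : m = 0
  · subst hm; simp
  · rw [coeff_C, if_neg (Ne.symm hm)]
    by_contra hc
    have := h hc
    change (Finsupp.weight fun _ => (1:ℕ)) m = 0 at this
    rw [← Finsupp.degree_eq_weight_one] at this
    exact hm (Finsupp.degree_eq_zero_iff m |>.mp this)

lemma pderiv_isHomogeneous {σ : Type*} [CommSemiring R] {φ : MvPolynomial σ R} {d : ℕ}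
    (hφ : φ.IsHomogeneous d) (i : σ) : (pderiv i φ).IsHomogeneous (d - 1) := by
  classical
  conv in φ => rw [← φ.support_sum_monomial_coeff]
  rw [map_sum]
  apply MvPolynomial.IsHomogeneous.sum
  intro s hs
  rw [pderiv_monomial]
  rcases Nat.eq_zero_or_pos (s i) with h | h
  · rw [h]; push_cast; rw [mul_zero, map_zero]; exact isHomogeneous_zero _ _ _
  · apply isHomogeneous_monomial
    have hdeg : Finsupp.degree s = d := by
      rw [Finsupp.degree_eq_weight_one]; exact hφ (mem_support_iff.mp hs)
    have hsub : (s - Finsupp.single i 1) + Finsupp.single i 1 = s :=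
      tsub_add_cancel_of_le (Finsupp.single_le_iff.mpr h)
    have : Finsupp.degree (s - Finsupp.single i 1) + Finsupp.degree (Finsupp.single i 1)
        = Finsupp.degree s := by
      simp only [Finsupp.degree_eq_weight_one]
      rw [← map_add, hsub]
    have hone : Finsupp.degree (Finsupp.single i (1:ℕ)) = 1 := by
      rw [Finsupp.degree_apply, Finsupp.support_single_ne_zero _ one_ne_zero, Finset.sum_singleton,
        Finsupp.single_eq_same]
    have hd1 : 1 ≤ d := by
      have : s i ≤ Finsupp.degree s := Finsupp.le_degree i s
      omega
    omega

/-- a nonzero homogeneous polynomial of positive degree is not a unit -/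
lemma homog_not_unit [CommRing R] [IsDomain R] {L : MvPolynomial σ R} {k : ℕ}
    (hL : L.IsHomogeneous k) (h0 : L ≠ 0) (hk : k ≠ 0) : ¬ IsUnit L := by
  intro hu
  obtain ⟨v, hv⟩ := IsUnit.exists_right_inv hu
  obtain ⟨i, j, hij, hLi, _⟩ := homog_factor (isHomogeneous_one σ R) one_ne_zero hv.symm
  have : i = k := MvPolynomial.IsHomogeneous.inj_right hLi hL h0
  omega

lemma linear_prime {σ : Type*} [Field R] {L : MvPolynomial σ R}
    (hL : L.IsHomogeneous 1) (h0 : L ≠ 0) : Prime L := by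
  rw [← UniqueFactorizationMonoid.irreducible_iff_prime]
  constructor
  · exact homog_not_unit hL h0 one_ne_zero
  · intro a b hab
    obtain ⟨i, j, hij, hai, hbj⟩ := homog_factor hL h0 hab
    have ha : a ≠ 0 := fun h => h0 (by simp [hab, h])
    have hb : b ≠ 0 := fun h => h0 (by simp [hab, h])
    rcases Nat.eq_zero_or_pos i with hi | hi
    · left
      subst hi
      rw [homog0_eq_C hai]
      exact (isUnit_iff_ne_zero.mpr
        (fun h => ha (by rw [homog0_eq_C hai, h, map_zero]))).map (C : R →+* MvPolynomial σ R)
    · right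
      have hj : j = 0 := by omega
      subst hj
      rw [homog0_eq_C hbj]
      exact (isUnit_iff_ne_zero.mpr
        (fun h => hb (by rw [homog0_eq_C hbj, h, map_zero]))).map (C : R →+* MvPolynomial σ R)

section Height
variable {A : Type*} [CommRing A] [IsDomain A]

/-- the point of the prime spectrum corresponding to the zero ideal -/
noncomputable def botPt : PrimeSpectrum A := ⟨⊥, Ideal.bot_prime⟩

lemma botPt_le (p : PrimeSpectrum A) : botPt ≤ p :=
  show (botPt : PrimeSpectrum A).asIdeal ≤ p.asIdeal from bot_le

lemma one_le_height {p : PrimeSpectrum A} (hp : p.asIdeal ≠ ⊥) : 1 ≤ Order.height p := by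
  rw [ENat.one_le_iff_ne_zero]
  intro h
  have hmin : IsMin p := Order.height_eq_zero.mp h
  have : p ≤ botPt := hmin (botPt_le p)
  exact hp (le_bot_iff.mp this)

lemma isMin_of_bot {p : PrimeSpectrum A} (hp : p.asIdeal = ⊥) : IsMin p := by
  intro q hq
  have h2 : q.asIdeal ≤ p.asIdeal := hq
  have h3 : q.asIdeal = ⊥ := le_bot_iff.mp (hp ▸ h2)
  show p.asIdeal ≤ q.asIdeal
  exact le_of_eq (hp.trans h3.symm)

lemma lt_spanL_bot [UniqueFactorizationMonoid A] {g : A} (hg : Prime g) (q : PrimeSpectrum A)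
    (hq : q < ⟨Ideal.span {g}, (Ideal.span_singleton_prime hg.ne_zero).mpr hg⟩) :
    q.asIdeal = ⊥ := by
  by_contra hne
  obtain ⟨f, hf, hf0⟩ := Submodule.exists_mem_ne_zero_of_ne_bot hne
  have hqle : q.asIdeal ≤ Ideal.span {g} := le_of_lt hq
  have hgq : g ∉ q.asIdeal := by
    intro hgq
    have : Ideal.span {g} ≤ q.asIdeal := (Ideal.span_singleton_le_iff_mem _).mpr hgq
    exact absurd (le_antisymm hqle this) (ne_of_lt hq)
  obtain ⟨k, c, hc, rfl⟩ := WfDvdMonoid.max_power_factor hf0 hg.irreducible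
  have hcq : c ∈ q.asIdeal := by
    rcases q.isPrime.mem_or_mem hf with h | h
    · exact absurd (q.isPrime.mem_of_pow_mem _ h) hgq
    · exact h
  exact hc (Ideal.mem_span_singleton.mp (hqle hcq))

lemma height_spanL [UniqueFactorizationMonoid A] {g : A} (hg : Prime g) :
    Order.height (⟨Ideal.span {g}, (Ideal.span_singleton_prime hg.ne_zero).mpr hg⟩ :
      PrimeSpectrum A) = 1 := by
  apply le_antisymm
  · rw [show (1 : ℕ∞) = ((1 : ℕ) : ℕ∞) from rfl, Order.height_le_coe_iff]
    simp only [Nat.cast_one]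
    intro q hq
    have hbot : q.asIdeal = ⊥ := lt_spanL_bot hg q hq
    rw [ENat.lt_one_iff_eq_zero, Order.height_eq_zero]
    exact isMin_of_bot hbot
  · apply one_le_height
    simp only [ne_eq, Ideal.span_singleton_eq_bot]
    exact hg.ne_zero

lemma height_le_one_principal {p : PrimeSpectrum A} [UniqueFactorizationMonoid A]
    (hp : p.asIdeal ≠ ⊥) (h1 : Order.height p ≤ 1) :
    ∃ g : A, Prime g ∧ p.asIdeal = Ideal.span {g} := by
  obtain ⟨g, hgmem, hg⟩ := p.isPrime.exists_mem_prime_of_ne_bot hp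
  refine ⟨g, hg, ?_⟩
  set q : PrimeSpectrum A := ⟨Ideal.span {g}, (Ideal.span_singleton_prime hg.ne_zero).mpr hg⟩
  have hqp : q ≤ p := (Ideal.span_singleton_le_iff_mem _).mpr hgmem
  rcases eq_or_lt_of_le hqp with h | h
  · rw [← h]
  · exfalso
    rw [show (1 : ℕ∞) = ((1 : ℕ) : ℕ∞) from rfl, Order.height_le_coe_iff] at h1
    have := h1 q h
    rw [Nat.cast_one, ENat.lt_one_iff_eq_zero, Order.height_eq_zero] at this
    have hb : q.asIdeal = ⊥ := le_bot_iff.mp (this (botPt_le q))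
    simp only [q, Ideal.span_singleton_eq_bot] at hb
    exact hg.ne_zero hb

end Height

-- helper: nonvanishing of some partial derivative
lemma exists_pderiv_ne_zero {σ : Type*} [Fintype σ] {d : ℕ} {φ : MvPolynomial σ ℂ}
    (hφ : φ.IsHomogeneous d) (h0 : φ ≠ 0) (hd : d ≠ 0) : ∃ i, pderiv i φ ≠ 0 := by
  by_contra h
  push_neg at h
  have he := euler hφ
  rw [Finset.sum_eq_zero (fun i _ => by rw [h i, mul_zero])] at he
  have : ((d : ℂ)) • φ = 0 := by rw [Nat.cast_smul_eq_nsmul, ← he]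
  rcases smul_eq_zero.mp this with h' | h'
  · exact hd (Nat.cast_eq_zero.mp h')
  · exact h0 h'

lemma dvd_of_dvd_pderivs {σ : Type*} [Fintype σ] {d : ℕ} {φ : MvPolynomial σ ℂ}
    (hφ : φ.IsHomogeneous d) (hd : d ≠ 0) {g : MvPolynomial σ ℂ}
    (h : ∀ i, g ∣ pderiv i φ) : g ∣ φ := by
  have he := euler hφ
  have h1 : g ∣ d • φ := he ▸ Finset.dvd_sum (fun i _ => (h i).mul_left _)
  have h2 : (C ((d : ℂ)⁻¹) * (d • φ) : MvPolynomial σ ℂ) = φ := by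
    rw [← Nat.cast_smul_eq_nsmul ℂ, smul_eq_C_mul, ← mul_assoc, ← C_mul,
      inv_mul_cancel₀ (Nat.cast_ne_zero.mpr hd), C_1, one_mul]
  exact h2 ▸ h1.mul_left _

set_option maxHeartbeats 1000000 in
/-- a nonzero homogeneous cubic has singular locus of codimension 1
iff it is of the form `L² M` for linear forms; these are exactly the points of the
tangential variety of the third Veronese variety. -/
theorem stmt8 (n : ℕ) :
    (∀ F : MvPolynomial (Fin (n + 1)) ℂ, F ≠ 0 → F.IsHomogeneous 3 → SGR F = 1 →
      ∃ L M : MvPolynomial (Fin (n + 1)) ℂ,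
        L.IsHomogeneous 1 ∧ M.IsHomogeneous 1 ∧ F = L ^ 2 * M) ∧
    (∀ L M : MvPolynomial (Fin (n + 1)) ℂ, L.IsHomogeneous 1 → M.IsHomogeneous 1 →
      LinearIndependent ℂ ![L, M] → SGR (L ^ 2 * M) = 1) := by
  constructor
  · -- forward direction
    intro F hF0 hF hSGR
    obtain ⟨i₀, hi₀⟩ := exists_pderiv_ne_zero hF hF0 (by norm_num)
    rw [SGR, idealHeight] at hSGR
    have hlt : ⨅ p : {p : PrimeSpectrum _ // jacobianIdeal F ≤ p.asIdeal},
        Order.height p.1 < 2 := by rw [hSGR]; norm_num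
    obtain ⟨⟨p, hp⟩, hplt⟩ := iInf_lt_iff.mp hlt
    have hle1 : Order.height p ≤ 1 := by
      rw [show (2 : ℕ∞) = 1 + 1 from rfl, ENat.lt_add_one_iff (by simp)] at hplt
      exact hplt
    have hpne : p.asIdeal ≠ ⊥ := by
      intro hb
      apply hi₀
      have : pderiv i₀ F ∈ jacobianIdeal F := Ideal.subset_span (Set.mem_range_self i₀)
      simpa [hb] using hp this
    obtain ⟨g, hg, hpg⟩ := height_le_one_principal hpne hle1
    have hdvd : ∀ i, g ∣ pderiv i F := by
      intro i
      refine Ideal.mem_span_singleton.mp ?_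
      rw [← hpg]
      exact hp (Ideal.subset_span (Set.mem_range_self i))
    -- g divides F
    obtain ⟨h, hfac⟩ := dvd_of_dvd_pderivs hF (by norm_num) hdvd
    obtain ⟨dg, dh, hsum, hgh, hhh⟩ := homog_factor hF hF0 hfac
    have hdg1 : 1 ≤ dg := by
      rcases Nat.eq_zero_or_pos dg with h' | h'
      · exfalso
        apply hg.not_unit
        have hg0 : g.IsHomogeneous 0 := by rw [← h']; exact hgh
        rw [homog0_eq_C hg0]
        exact (isUnit_iff_ne_zero.mpr (fun hc => hg.ne_zero (by
          rw [homog0_eq_C hg0, hc, map_zero]))).map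
          (C : ℂ →+* MvPolynomial (Fin (n+1)) ℂ)
      · exact h'
    -- there is a nonzero partial of g, not divisible by g
    obtain ⟨i₁, hi₁⟩ := exists_pderiv_ne_zero hgh hg.ne_zero (by omega)
    have hnd : ¬ g ∣ pderiv i₁ g := by
      intro ⟨q, hq⟩
      obtain ⟨i', j', hij', hgi', _⟩ :=
        homog_factor (pderiv_isHomogeneous hgh i₁) hi₁ hq
      have : i' = dg := MvPolynomial.IsHomogeneous.inj_right hgi' hgh hg.ne_zero
      omega
    -- g divides h
    have hgdvdh : g ∣ h := by
      have h1 : g ∣ pderiv i₁ g * h + g * pderiv i₁ h := by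
        rw [← pderiv_mul, ← hfac]; exact hdvd i₁
      have h2 : g ∣ pderiv i₁ g * h := by
        have := dvd_sub h1 (dvd_mul_right g (pderiv i₁ h))
        simpa using this
      exact (hg.2.2 _ _ h2).resolve_left hnd
    obtain ⟨m, hm⟩ := hgdvdh
    have hfac2 : F = g ^ 2 * m := by rw [hfac, hm]; ring
    obtain ⟨i', j', hij', hgi2, hmj⟩ := homog_factor hF hF0 hfac2
    have hg2 : (g ^ 2).IsHomogeneous (dg * 2) := hgh.pow 2
    have hg2ne : g ^ 2 ≠ 0 := pow_ne_zero 2 hg.ne_zero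
    have hieq : i' = dg * 2 := MvPolynomial.IsHomogeneous.inj_right hgi2 hg2 hg2ne
    have hdg : dg = 1 ∧ j' = 1 := by omega
    exact ⟨g, m, hdg.1 ▸ hgh, hdg.2 ▸ hmj, hfac2⟩
  · -- converse direction
    intro L M hL hM hLM
    have hL0 : L ≠ 0 := by
      have := hLM.ne_zero 0
      simpa using this
    have hM0 : M ≠ 0 := by
      have := hLM.ne_zero 1
      simpa using this
    have hF0 : L ^ 2 * M ≠ 0 := mul_ne_zero (pow_ne_zero 2 hL0) hM0
    have hF : (L ^ 2 * M).IsHomogeneous 3 := by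
      have := (hL.pow 2).mul hM
      norm_num at this
      exact this
    have hprime : Prime L := linear_prime hL hL0
    have hJle : jacobianIdeal (L ^ 2 * M) ≤ Ideal.span {L} := by
      rw [jacobianIdeal, Ideal.span_le]
      rintro _ ⟨i, rfl⟩
      change pderiv i (L ^ 2 * M) ∈ Ideal.span {L}
      refine Ideal.mem_span_singleton.mpr ?_
      exact ⟨((2:ℕ) : MvPolynomial (Fin (n+1)) ℂ) * pderiv i L * M + L * pderiv i M, by
        rw [pderiv_mul, pderiv_pow]; ring⟩
    rw [SGR, idealHeight]
    apply le_antisymm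
    · refine le_trans (iInf_le _ ⟨⟨Ideal.span {L},
        (Ideal.span_singleton_prime hprime.ne_zero).mpr hprime⟩, hJle⟩) ?_
      exact le_of_eq (height_spanL hprime)
    · refine le_iInf ?_
      rintro ⟨p, hp⟩
      apply one_le_height
      intro hb
      obtain ⟨i₀, hi₀⟩ := exists_pderiv_ne_zero hF hF0 (by norm_num)
      apply hi₀
      have : pderiv i₀ (L ^ 2 * M) ∈ jacobianIdeal (L ^ 2 * M) :=
        Ideal.subset_span (Set.mem_range_self i₀)
      exact (Submodule.mem_bot _).mp (hb ▸ hp this)
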